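/- The graph H obtained from K_{3,3} by adding a handle (the unique such graph other than the Wagner graph, on 8 vertices) has, up to automorphism, a unique perfect matching, and its four perfect matching edges are pairwise joined by an edge of H; consequently H admits no red-blue induced perfect matching. -/

import Mathlib

/-- The graph H obtained from K_{3,3} (parts {0,1,2} and {3,4,5}) by subdividing the
two adjacent edges 0-3 and 0-4 with new vertices 6 and 7 and adding the handle 6-7;
this is the non-Wagner cubic graph obtained from K_{3,3} by adding a handle. -/
def Hgraph : SimpleGraph (Fin 8) :=
  SimpleGraph.fromRel (fun a b =>
    (a, b) ∈ ([(0, 5), (0, 6), (0, 7), (1, 3), (1, 4), (1, 5), (2, 3), (2, 4),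
      (2, 5), (3, 6), (4, 7), (6, 7)] : List (Fin 8 × Fin 8)))

instance : DecidableRel Hgraph.Adj := fun a b =>
  decidable_of_iff' _ (SimpleGraph.fromRel_adj _ a b)

instance (p : Fin 8 → Prop) [DecidablePred p] : Decidable (∃! x, p x) :=
  decidable_of_iff (∃ x, p x ∧ ∀ y, p y → y = x) Iff.rfl

/-- neighbor table of Hgraph -/
def nbr : Fin 8 → Fin 3 → Fin 8 :=
  ![![5,6,7], ![3,4,5], ![3,4,5], ![1,2,6], ![1,2,7], ![0,1,2], ![0,3,7], ![0,4,6]]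

/-- the six perfect matchings, as partner functions -/
def fvec : Fin 6 → Fin 8 → Fin 8 :=
  ![![5,3,4,1,2,0,7,6], ![5,4,3,2,1,0,7,6], ![6,5,3,2,7,1,0,4],
    ![6,3,5,1,7,2,0,4], ![7,4,5,6,1,2,3,0], ![7,5,4,6,2,1,3,0]]

/-- automorphisms mapping matching i onto matching 0 -/
def pvec : Fin 6 → Fin 8 → Fin 8 :=
  ![![0,1,2,3,4,5,6,7], ![0,1,2,4,3,5,7,6], ![6,1,2,4,5,3,7,0],
    ![6,2,1,4,5,3,7,0], ![6,2,1,5,4,3,0,7], ![6,1,2,5,4,3,0,7]]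

def qvec : Fin 6 → Fin 8 → Fin 8 :=
  ![![0,1,2,3,4,5,6,7], ![0,1,2,4,3,5,7,6], ![7,1,2,5,3,4,0,6],
    ![7,2,1,5,3,4,0,6], ![6,2,1,5,4,3,0,7], ![6,1,2,5,4,3,0,7]]

lemma pq : ∀ i x, qvec i (pvec i x) = x := by decide
lemma qp : ∀ i x, pvec i (qvec i x) = x := by decide
lemma padj : ∀ i a b, Hgraph.Adj (pvec i a) (pvec i b) ↔ Hgraph.Adj a b := by decide
lemma fsym : ∀ i a b, b = fvec i a → a = fvec i b := by decide
lemma fadj : ∀ (i : Fin 6) (a b : Fin 8), b = fvec i a → Hgraph.Adj a b := by decide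
lemma nbr_exists : ∀ v w, Hgraph.Adj v w → ∃ j, nbr v j = w := by decide
lemma base : ∀ i a, pvec i (fvec i a) = fvec 0 (pvec i a) := by decide
lemma base2 : ∀ j x, qvec j (fvec 0 x) = fvec j (qvec j x) := by decide
lemma part2aux : ∀ (i : Fin 6) (a x : Fin 8), s(a, fvec i a) ≠ s(x, fvec i x) →
    (Hgraph.Adj a x ∨ Hgraph.Adj a (fvec i x) ∨ Hgraph.Adj (fvec i a) x ∨
      Hgraph.Adj (fvec i a) (fvec i x)) := by decide

set_option maxHeartbeats 4000000 in
lemma key : ∀ a0 a1 a2 a3 a4 a5 a6 a7 : Fin 3,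
    (∀ v, nbr (nbr v (![a0,a1,a2,a3,a4,a5,a6,a7] v))
      (![a0,a1,a2,a3,a4,a5,a6,a7] (nbr v (![a0,a1,a2,a3,a4,a5,a6,a7] v))) = v) →
    ∃ i : Fin 6, (fun v => nbr v (![a0,a1,a2,a3,a4,a5,a6,a7] v)) = fvec i := by decide

lemma part3aux : ∀ c0 c1 c2 c3 c4 c5 c6 c7 : Bool,
    ¬ ∀ v, ∃! w, Hgraph.Adj v w ∧
      (![c0,c1,c2,c3,c4,c5,c6,c7] w) = (![c0,c1,c2,c3,c4,c5,c6,c7] v) := by decide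

/-- the subgraph determined by a partner function -/
def mkM (f : Fin 8 → Fin 8) (hs : ∀ a b : Fin 8, b = f a → a = f b)
    (ha : ∀ a b : Fin 8, b = f a → Hgraph.Adj a b) : Hgraph.Subgraph where
  verts := Set.univ
  Adj a b := b = f a
  adj_sub h := ha _ _ h
  edge_vert _ := Set.mem_univ _
  symm := ⟨fun a b h => hs a b h⟩

def Mi (i : Fin 6) : Hgraph.Subgraph := mkM (fvec i) (fsym i) (fadj i)

def phi (i : Fin 6) : Hgraph ≃g Hgraph :=
  ⟨⟨pvec i, qvec i, pq i, qp i⟩, @fun a b => padj i a b⟩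

lemma pm_char (M : Hgraph.Subgraph) (hM : M.IsPerfectMatching) :
    ∃ i : Fin 6, M = Mi i := by
  choose f hf hu using fun v => hM.1 (hM.2 v)
  have hiff : ∀ a b, M.Adj a b ↔ b = f a := fun a b => ⟨hu a b, fun h => h ▸ hf a⟩
  have hinv : ∀ v, f (f v) = v := fun v => (hu (f v) v (M.adj_symm (hf v))).symm
  have hadj : ∀ v, Hgraph.Adj v (f v) := fun v => M.adj_sub (hf v)
  choose g hg using fun v => nbr_exists v (f v) (hadj v)
  have heq : (![g 0, g 1, g 2, g 3, g 4, g 5, g 6, g 7] : Fin 8 → Fin 3) = g := by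
    funext v; fin_cases v <;> rfl
  have hk := key (g 0) (g 1) (g 2) (g 3) (g 4) (g 5) (g 6) (g 7)
  rw [heq] at hk
  have hcond : ∀ v, nbr (nbr v (g v)) (g (nbr v (g v))) = v := by
    intro v; rw [hg v, hg (f v), hinv]
  obtain ⟨i, hi⟩ := hk hcond
  have hfi : f = fvec i := by rw [← hi]; funext v; exact (hg v).symm
  refine ⟨i, ?_⟩
  refine SimpleGraph.Subgraph.ext hM.2.verts_eq_univ ?_
  funext a b
  exact propext ((hiff a b).trans (by rw [hfi]; rfl))

lemma map_mkM (i j : Fin 6) (φ : Hgraph ≃g Hgraph)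
    (h : ∀ a, φ (fvec i a) = fvec j (φ a)) : (Mi i).map φ.toHom = Mi j := by
  refine SimpleGraph.Subgraph.ext ?_ ?_
  · show ⇑φ.toHom '' Set.univ = Set.univ
    rw [Set.image_univ]
    exact Set.range_eq_univ.mpr φ.toEquiv.surjective
  · funext a b
    apply propext
    show Relation.Map (Mi i).Adj _ _ a b ↔ b = fvec j a
    constructor
    · rintro ⟨x, y, hxy, rfl, rfl⟩
      have hy : y = fvec i x := hxy
      subst hy
      exact h x
    · rintro rfl
      refine ⟨φ.symm a, φ.symm (fvec j a), ?_, φ.apply_symm_apply a, φ.apply_symm_apply _⟩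
      show φ.symm (fvec j a) = fvec i (φ.symm a)
      have := h (φ.symm a)
      rw [φ.apply_symm_apply] at this
      rw [← this, φ.symm_apply_apply]

/-- H has a unique perfect matching up to automorphism, the four edges of any
perfect matching are pairwise joined by an edge of H, and consequently H has no
red-blue induced perfect matching. -/
theorem Hgraph_unique_pm_no_induced_pm :
    (∀ M M' : Hgraph.Subgraph, M.IsPerfectMatching → M'.IsPerfectMatching →
      ∃ φ : Hgraph ≃g Hgraph, M.map φ.toHom = M') ∧
    (∀ M : Hgraph.Subgraph, M.IsPerfectMatching →
      ∀ a b x y : Fin 8, M.Adj a b → M.Adj x y → s(a, b) ≠ s(x, y) →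
        (Hgraph.Adj a x ∨ Hgraph.Adj a y ∨ Hgraph.Adj b x ∨ Hgraph.Adj b y)) ∧
    ¬ ∃ c : Fin 8 → Bool, ∀ v, ∃! w, Hgraph.Adj v w ∧ c w = c v := by
  refine ⟨?_, ?_, ?_⟩
  · intro M M' hM hM'
    obtain ⟨i, rfl⟩ := pm_char M hM
    obtain ⟨j, rfl⟩ := pm_char M' hM'
    refine ⟨(phi i).trans (phi j).symm, map_mkM i j _ ?_⟩
    intro a
    show qvec j (pvec i (fvec i a)) = fvec j (qvec j (pvec i a))
    rw [base i, base2 j]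
  · intro M hM a b x y hab hxy hne
    obtain ⟨i, rfl⟩ := pm_char M hM
    have hb : b = fvec i a := hab
    have hy : y = fvec i x := hxy
    subst hb; subst hy
    exact part2aux i a x hne
  · rintro ⟨c, hc⟩
    apply part3aux (c 0) (c 1) (c 2) (c 3) (c 4) (c 5) (c 6) (c 7)
    have heq : (![c 0, c 1, c 2, c 3, c 4, c 5, c 6, c 7] : Fin 8 → Bool) = c := by
      funext v; fin_cases v <;> rfl
    rw [heq]; exact hc
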